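/- arXiv:1701.08384 — 8 statements merged into one kernel-verified Lean document; each statement's English description precedes it below -/
import Mathlib

section
/- If 4 divides n and gcd(i - j, n) = 2, then the set {a^{n/2}, a^i·b, a^j·b} does not generate the dihedral group D_{2n}. -/
open SimpleGraph

/-- `W` is a resolving set for `G`. -/
def IsResolving {V : Type*} (G : SimpleGraph V) (W : Set V) : Prop :=
  ∀ u v : V, (∀ w ∈ W, G.dist u w = G.dist v w) → u = v

/-- The metric dimension of `G`: minimum cardinality of a resolving set. -/
noncomputable def metricDim {V : Type*} (G : SimpleGraph V) : ℕ :=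
  sInf {n | ∃ W : Set V, W.ncard = n ∧ IsResolving G W}

/-- The Cayley graph of a group `G` with connection set `S`
(for `S` symmetric and not containing `1`, `u ~ v ↔ u * v⁻¹ ∈ S`). -/
def cayley {G : Type*} [Group G] (S : Set G) : SimpleGraph G :=
  SimpleGraph.fromRel (fun u v => u * v⁻¹ ∈ S)

/-- The rotation `a` in the dihedral group `D_{2n}`. -/
def A (n : ℕ) : DihedralGroup n := DihedralGroup.r 1

/-- The reflection `b` in the dihedral group `D_{2n}`. -/
def B (n : ℕ) : DihedralGroup n := DihedralGroup.sr 0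

lemma cast_neg2 {n : ℕ} (hn2 : (2:ℕ) ∣ n) (k : ZMod n) :
    ZMod.castHom hn2 (ZMod 2) (-k) = ZMod.castHom hn2 (ZMod 2) k := by
  rw [map_neg, CharTwo.neg_eq]

def phi (n : ℕ) (hn2 : (2:ℕ) ∣ n) (c : ZMod 2) : DihedralGroup n →* Multiplicative (ZMod 2) where
  toFun x := Multiplicative.ofAdd <| match x with
    | DihedralGroup.r k => ZMod.castHom hn2 (ZMod 2) k
    | DihedralGroup.sr k => ZMod.castHom hn2 (ZMod 2) k + c
  map_one' := by
    show Multiplicative.ofAdd _ = 1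
    simp [DihedralGroup.one_def, -DihedralGroup.r_zero]
  map_mul' := by
    have h2 : c + c = 0 := by revert c; decide
    rintro (k | k) (l | l) <;>
      simp only [DihedralGroup.r_mul_r, DihedralGroup.r_mul_sr, DihedralGroup.sr_mul_r,
        DihedralGroup.sr_mul_sr, ← ofAdd_add, sub_eq_add_neg, map_add, cast_neg2] <;>
      congr 1
    · ring
    · ring
    · linear_combination -h2

theorem stmt_2 (n : ℕ) (hn : 1 ≤ n) (i j : ℤ) (h4 : 4 ∣ n)
    (hg : Int.gcd (i - j) (n : ℤ) = 2) :
    Subgroup.closure ({A n ^ (n / 2), A n ^ i * B n, A n ^ j * B n} :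
      Set (DihedralGroup n)) ≠ ⊤ := by
  have hn2 : (2:ℕ) ∣ n := dvd_trans ⟨2, rfl⟩ h4
  set f := phi n hn2 (i : ZMod 2) with hf
  have hA : f (A n) = Multiplicative.ofAdd ((1 : ZMod 2)) := by
    show Multiplicative.ofAdd (ZMod.castHom hn2 (ZMod 2) 1) = _
    rw [map_one]
  have hB : f (B n) = Multiplicative.ofAdd ((i : ZMod 2)) := by
    simp [hf, phi, B]
  have hij : ((j : ZMod 2)) = ((i : ZMod 2)) := by
    have h2 : (2:ℤ) ∣ i - j := by
      have h : ((i - j).gcd (n:ℤ) : ℤ) ∣ (i - j) := Int.gcd_dvd_left _ _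
      rw [hg] at h; exact_mod_cast h
    have h0 := (ZMod.intCast_zmod_eq_zero_iff_dvd (i - j) 2).mpr h2
    push_cast at h0
    rw [sub_eq_zero] at h0
    exact h0.symm
  intro htop
  have hker : Subgroup.closure ({A (n : ℕ) ^ (n / 2), A n ^ i * B n, A n ^ j * B n} :
      Set (DihedralGroup n)) ≤ f.ker := by
    rw [Subgroup.closure_le]
    rintro x (rfl | rfl | rfl)
    · show f _ = 1
      rw [map_pow, hA]
      obtain ⟨m, rfl⟩ := h4
      have : (4 * m) / 2 = 2 * m := by omega
      rw [this, ← ofAdd_nsmul, nsmul_eq_mul, mul_one]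
      have hz : ((2 * m : ℕ) : ZMod 2) = 0 :=
        (ZMod.natCast_eq_zero_iff _ 2).mpr ⟨m, rfl⟩
      rw [hz]; rfl
    · show f _ = 1
      rw [map_mul, map_zpow, hA, hB, ← ofAdd_zsmul, ← ofAdd_add]
      rw [zsmul_eq_mul, mul_one, CharTwo.add_self_eq_zero]; rfl
    · show f _ = 1
      rw [map_mul, map_zpow, hA, hB, ← ofAdd_zsmul, ← ofAdd_add,
        zsmul_eq_mul, mul_one, hij, CharTwo.add_self_eq_zero]; rfl
  rw [htop, top_le_iff] at hker
  have hmem : A n ∈ f.ker := hker ▸ Subgroup.mem_top (A n)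
  rw [MonoidHom.mem_ker, hA] at hmem
  exact absurd hmem (by decide)
end

section
/- Every connected 3-regular bipartite graph has metric dimension at least 3. -/
open SimpleGraph

private lemma walk_parity {V : Type*} {G : SimpleGraph V} (c : G.Coloring (Fin 2))
    {u v : V} (p : G.Walk u v) : Even p.length ↔ c u = c v := by
  induction p with
  | nil => simp
  | @cons a b d h p ih =>
    have hne : c a ≠ c b := c.valid h
    have h1 : (c a).val < 2 := (c a).isLt
    have h2 : (c b).val < 2 := (c b).isLt
    have h3 : (c d).val < 2 := (c d).isLt
    simp only [Walk.length_cons, Nat.even_add_one, ih, Fin.ext_iff] at *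
    omega

private lemma dist_parity {V : Type*} {G : SimpleGraph V} (hconn : G.Connected)
    (c : G.Coloring (Fin 2)) (u v : V) : Even (G.dist u v) ↔ c u = c v := by
  obtain ⟨p, hp⟩ := hconn.exists_walk_length_eq_dist u v
  rw [← hp]; exact walk_parity c p

theorem stmt_4 {V : Type*} [Fintype V] (G : SimpleGraph V) (hconn : G.Connected)
    (hreg : ∀ v : V, (G.neighborSet v).ncard = 3) (hbip : G.Colorable 2) :
    3 ≤ metricDim G := by
  obtain ⟨c⟩ := hbip
  -- key: for any vertex with resolving set, two neighbors can't have equal dists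
  have key : ∀ (W : Set V), IsResolving G W → W.ncard ≤ 2 → False := by
    intro W hres hcard
    -- pick a vertex u: V is nonempty since G is connected
    have hV : Nonempty V := hconn.nonempty
    -- helper: neighbors and their distances
    have adj_dist : ∀ {x y : V}, G.Adj x y → G.dist x y = 1 := by
      intro x y h; exact dist_eq_one_iff_adj.mpr h
    interval_cases h : W.ncard
    · -- ncard = 0 : W empty (V finite), resolving forces all vertices equal
      have hWe : W = ∅ := by
        have : W.Finite := Set.toFinite W
        exact (Set.ncard_eq_zero this).mp h
      obtain ⟨u⟩ := hV
      obtain ⟨x, y, z, hxy, hxz, hyz, hset⟩ := Set.ncard_eq_three.mp (hreg u)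
      apply hxy
      apply hres x y
      intro w hw; rw [hWe] at hw; exact absurd hw (Set.notMem_empty w)
    · -- ncard = 1 : W = {w}; two neighbors of w have equal distance to w
      obtain ⟨w, hW⟩ := Set.ncard_eq_one.mp h
      obtain ⟨x, y, z, hxy, hxz, hyz, hset⟩ := Set.ncard_eq_three.mp (hreg w)
      have hx : G.Adj w x := by
        have : x ∈ G.neighborSet w := by rw [hset]; simp
        exact this
      have hy : G.Adj w y := by
        have : y ∈ G.neighborSet w := by rw [hset]; simp
        exact this
      apply hxy
      apply hres x y
      intro t ht
      rw [hW, Set.mem_singleton_iff] at ht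
      subst ht
      rw [SimpleGraph.dist_comm, adj_dist hx, SimpleGraph.dist_comm, adj_dist hy]
    · -- ncard = 2 : W = {u, v}
      obtain ⟨u, v, huv, hW⟩ := Set.ncard_eq_two.mp h
      obtain ⟨x, y, z, hxy, hxz, hyz, hset⟩ := Set.ncard_eq_three.mp (hreg u)
      have hx : G.Adj u x := by
        have : x ∈ G.neighborSet u := by rw [hset]; simp
        exact this
      have hy : G.Adj u y := by
        have : y ∈ G.neighborSet u := by rw [hset]; simp
        exact this
      have hz : G.Adj u z := by
        have : z ∈ G.neighborSet u := by rw [hset]; simp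
        exact this
      set d := G.dist u v with hd
      -- each neighbor t of u has dist t v ∈ {d-1, d+1}
      have nbr : ∀ t : V, G.Adj u t → G.dist t v = d - 1 ∨ G.dist t v = d + 1 := by
        intro t ht
        have h1 : G.dist t v ≤ d + 1 := by
          have := hconn.dist_triangle (u := t) (v := u) (w := v)
          rw [SimpleGraph.dist_comm (u := t) (v := u), adj_dist ht] at this
          omega
        have h2 : d ≤ G.dist t v + 1 := by
          have := hconn.dist_triangle (u := u) (v := t) (w := v)
          rw [adj_dist ht] at this
          omega
        have hne : G.dist t v ≠ d := by
          intro heq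
          have p1 := dist_parity hconn c t v
          have p2 := dist_parity hconn c u v
          rw [heq] at p1
          rw [← hd] at p2
          have hiff : (c t = c v) ↔ (c u = c v) := by rw [← p1, ← p2]
          have hvalid : c u ≠ c t := c.valid ht
          have b1 := (c t).isLt
          have b2 := (c u).isLt
          have b3 := (c v).isLt
          simp only [Fin.ext_iff] at hiff hvalid
          omega
        omega
      -- pigeonhole among x, y, z
      rcases nbr x hx with h1 | h1 <;> rcases nbr y hy with h2 | h2 <;>
        rcases nbr z hz with h3 | h3
      all_goals {
        first
        | (apply hxy; apply hres x y; intro t ht;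
           rw [hW] at ht; rcases ht with rfl | rfl
           · rw [SimpleGraph.dist_comm, adj_dist hx, SimpleGraph.dist_comm, adj_dist hy]
           · rw [h1, h2])
        | (apply hxz; apply hres x z; intro t ht;
           rw [hW] at ht; rcases ht with rfl | rfl
           · rw [SimpleGraph.dist_comm, adj_dist hx, SimpleGraph.dist_comm, adj_dist hz]
           · rw [h1, h3])
        | (apply hyz; apply hres y z; intro t ht;
           rw [hW] at ht; rcases ht with rfl | rfl
           · rw [SimpleGraph.dist_comm, adj_dist hy, SimpleGraph.dist_comm, adj_dist hz]
           · rw [h2, h3])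
      }
  -- now conclude
  apply le_csInf
  · exact ⟨(Set.univ : Set V).ncard, Set.univ, rfl, by
      intro a b hab
      have := hab b (Set.mem_univ b)
      rw [SimpleGraph.dist_self] at this
      exact (hconn.dist_eq_zero_iff).mp this⟩
  · rintro n ⟨W, rfl, hres⟩
    by_contra hn
    exact key W hres (by omega)
end

section
/- Let G be a connected graph with metric dimension 2 and let {u, v} be a resolving set (basis) for G. Then the degrees of u and v are each at most 3. -/
open SimpleGraph

lemma aux_deg {V : Type*} [Fintype V] (G : SimpleGraph V) (hconn : G.Connected)
    (u v : V) (hres : IsResolving G {u, v}) :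
    (G.neighborSet u).ncard ≤ 3 := by
  by_contra h
  push_neg at h
  set d := G.dist u v with hd
  have hfin : (G.neighborSet u).Finite := Set.toFinite _
  have hmaps : ∀ w ∈ hfin.toFinset, G.dist w v ∈ Finset.Icc (d - 1) (d + 1) := by
    intro w hw
    rw [Set.Finite.mem_toFinset, mem_neighborSet] at hw
    have h1 : G.dist u w = 1 := dist_eq_one_iff_adj.mpr hw
    have t1 : G.dist w v ≤ G.dist w u + G.dist u v := hconn.dist_triangle
    have t2 : G.dist u v ≤ G.dist u w + G.dist w v := hconn.dist_triangle
    rw [show G.dist w u = G.dist u w from G.dist_comm] at t1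
    rw [h1] at t1 t2
    rw [Finset.mem_Icc]
    omega
  have hcard : (Finset.Icc (d - 1) (d + 1)).card < hfin.toFinset.card := by
    have : (Finset.Icc (d - 1) (d + 1)).card ≤ 3 := by
      rw [Nat.card_Icc]; omega
    have h2 : (G.neighborSet u).ncard = hfin.toFinset.card :=
      Set.ncard_eq_toFinset_card _ hfin
    omega
  obtain ⟨w1, hw1, w2, hw2, hne, heq⟩ :=
    Finset.exists_ne_map_eq_of_card_lt_of_maps_to hcard hmaps
  rw [Set.Finite.mem_toFinset, mem_neighborSet] at hw1 hw2
  apply hne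
  apply hres
  intro w hw
  rcases hw with rfl | hw
  · rw [show G.dist w1 w = G.dist w w1 from G.dist_comm,
      show G.dist w2 w = G.dist w w2 from G.dist_comm,
      dist_eq_one_iff_adj.mpr hw1, dist_eq_one_iff_adj.mpr hw2]
  · rcases hw with rfl; exact heq

theorem stmt_5 {V : Type*} [Fintype V] (G : SimpleGraph V) (hconn : G.Connected)
    (u v : V) (huv : u ≠ v) (hdim : metricDim G = 2)
    (hres : IsResolving G {u, v}) :
    (G.neighborSet u).ncard ≤ 3 ∧ (G.neighborSet v).ncard ≤ 3 := by
  have hres' : IsResolving G {v, u} := by rwa [Set.pair_comm]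
  exact ⟨aux_deg G hconn u v hres, aux_deg G hconn v u hres'⟩
end

section
/- Let G be a connected graph with metric dimension 2 and let {u, v} be a resolving set for G. Then there is a unique shortest path from u to v in G. -/
open SimpleGraph

/-- For every index `i` there is a prefix-like walk from `u` to `p.getVert i`
of length at most `i`. -/
lemma exists_prefix {V : Type*} {G : SimpleGraph V} :
    ∀ {u v : V} (p : G.Walk u v) (i : ℕ), ∃ q : G.Walk u (p.getVert i), q.length ≤ i
  | _, _, .nil, _ => ⟨.nil, by simp⟩
  | _, _, .cons _ _, 0 => ⟨.nil, Nat.le_of_eq rfl⟩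
  | _, _, .cons h p, (i+1) => by
      obtain ⟨q, hq⟩ := exists_prefix p i
      exact ⟨.cons h q, by simpa using hq⟩

/-- For every index `i` there is a suffix walk from `p.getVert i` to `v`
of length at most `p.length - i`. -/
lemma exists_suffix {V : Type*} {G : SimpleGraph V} :
    ∀ {u v : V} (p : G.Walk u v) (i : ℕ), ∃ q : G.Walk (p.getVert i) v, q.length ≤ p.length - i
  | _, _, .nil, _ => ⟨.nil, by simp⟩
  | _, _, .cons h p, 0 => ⟨.cons h p, Nat.le_of_eq rfl⟩
  | _, _, .cons h p, (i+1) => by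
      obtain ⟨q, hq⟩ := exists_suffix p i
      exact ⟨q, by simpa using hq⟩

/-- Two walks with the same endpoints, the same length, and the same vertices
at every index are equal. -/
lemma walk_ext {V : Type*} {G : SimpleGraph V} :
    ∀ {u v : V} (p q : G.Walk u v), p.length = q.length →
      (∀ i, p.getVert i = q.getVert i) → p = q
  | _, _, .nil, .nil, _, _ => rfl
  | _, _, .nil, .cons _ _, hl, _ => by simp at hl
  | _, _, .cons _ _, .nil, hl, _ => by simp at hl
  | u, v, @SimpleGraph.Walk.cons _ _ _ b _ h p, @SimpleGraph.Walk.cons _ _ _ b' _ h' q, hl, hv => by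
      have hb : b = b' := by simpa using hv 1
      subst hb
      rw [walk_ext p q (by simpa using hl) (fun i => by simpa using hv (i+1))]

theorem stmt_6 {V : Type*} [Fintype V] (G : SimpleGraph V) (hconn : G.Connected)
    (u v : V) (huv : u ≠ v) (hdim : metricDim G = 2)
    (hres : IsResolving G {u, v}) :
    ∃! p : G.Walk u v, p.IsPath ∧ p.length = G.dist u v := by
  obtain ⟨p0, hp0, hl0⟩ := hconn.exists_path_of_dist u v
  refine ⟨p0, ⟨hp0, hl0⟩, ?_⟩
  rintro q ⟨hq, hql⟩
  -- any two shortest walks agree at each index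
  have key : ∀ (p q : G.Walk u v), p.length = G.dist u v → q.length = G.dist u v →
      ∀ i, p.getVert i = q.getVert i := by
    intro p q hp hq i
    by_cases hi : p.length ≤ i
    · rw [p.getVert_of_length_le hi, q.getVert_of_length_le (by omega)]
    push_neg at hi
    have hdistVert : ∀ (r : G.Walk u v), r.length = G.dist u v →
        G.dist u (r.getVert i) = i ∧ G.dist (r.getVert i) v = G.dist u v - i := by
      intro r hr
      obtain ⟨q1, hq1⟩ := exists_prefix r i
      obtain ⟨q2, hq2⟩ := exists_suffix r i
      have h1 : G.dist u (r.getVert i) ≤ i := le_trans (dist_le q1) hq1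
      have h2 : G.dist (r.getVert i) v ≤ G.dist u v - i := le_trans (dist_le q2) (by omega)
      have h3 : G.dist u v ≤ G.dist u (r.getVert i) + G.dist (r.getVert i) v :=
        hconn.dist_triangle
      have hile : i ≤ G.dist u v := by omega
      omega
    obtain ⟨hpu, hpv⟩ := hdistVert p hp
    obtain ⟨hqu, hqv⟩ := hdistVert q hq
    apply hres
    intro w hw
    rcases hw with rfl | rfl
    · rw [dist_comm, hpu, dist_comm, hqu]
    · rw [hpv, hqv]
  exact walk_ext q p0 (by omega) (key q p0 hql hl0)
end

section
/- Let G be a connected graph with metric dimension 2, let {u, v} be a resolving set for G, and let P be a shortest path from u to v. Then every internal vertex of P has degree at most 5. -/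
open SimpleGraph

theorem stmt_7 {V : Type*} [Fintype V] (G : SimpleGraph V) (hconn : G.Connected)
    (u v : V) (huv : u ≠ v) (hdim : metricDim G = 2)
    (hres : IsResolving G {u, v}) (P : G.Walk u v) (hP : P.IsPath)
    (hshort : P.length = G.dist u v)
    (w : V) (hw : w ∈ P.support) (hwu : w ≠ u) (hwv : w ≠ v) :
    (G.neighborSet w).ncard ≤ 5 := by
  have hres' : ∀ x y : V, (∀ z ∈ ({u, v} : Set V), G.dist x z = G.dist y z) → x = y := hres
  classical
  set a := G.dist u w with ha
  set b := G.dist w v with hb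
  -- a + b = dist u v
  have hsplit : a + b = G.dist u v := by
    have h1 : G.dist u w ≤ (P.takeUntil w hw).length := dist_le _
    have h2 : G.dist w v ≤ (P.dropUntil w hw).length := dist_le _
    have h3 : (P.takeUntil w hw).length + (P.dropUntil w hw).length = P.length := by
      have := congr_arg Walk.length (P.take_spec hw)
      rwa [Walk.length_append] at this
    have h4 : G.dist u v ≤ a + b := hconn.dist_triangle
    omega
  have ha1 : 1 ≤ a := hconn.pos_dist_of_ne (Ne.symm hwu)
  have hb1 : 1 ≤ b := hconn.pos_dist_of_ne hwv
  set t : Set (ℕ × ℕ) := {(a-1,b+1),(a+1,b-1),(a,b+1),(a+1,b),(a+1,b+1)} with ht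
  have key : (G.neighborSet w).ncard ≤ t.ncard := by
    apply Set.ncard_le_ncard_of_injOn (fun x => (G.dist u x, G.dist v x))
    · intro x hx
      rw [mem_neighborSet] at hx
      have hwx : G.dist w x = 1 := dist_eq_one_iff_adj.mpr hx
      have hxw : G.dist x w = 1 := by rwa [SimpleGraph.dist_comm] at hwx
      have e1 : G.dist u x ≤ a + 1 := by
        have := hconn.dist_triangle (u := u) (v := w) (w := x); omega
      have e2 : a ≤ G.dist u x + 1 := by
        have := hconn.dist_triangle (u := u) (v := x) (w := w); omega
      have e3 : G.dist v x ≤ b + 1 := by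
        have := hconn.dist_triangle (u := v) (v := w) (w := x)
        rw [dist_comm (u := v) (v := w)] at this; omega
      have e4 : b ≤ G.dist v x + 1 := by
        have := hconn.dist_triangle (u := w) (v := x) (w := v)
        rw [dist_comm (u := x) (v := v)] at this; omega
      have e5 : a + b ≤ G.dist u x + G.dist v x := by
        have := hconn.dist_triangle (u := u) (v := x) (w := v)
        rw [dist_comm (u := x) (v := v)] at this; omega
      have e6 : ¬ (G.dist u x = a ∧ G.dist v x = b) := by
        rintro ⟨hq1, hq2⟩
        exact hx.ne' (hres' x w (by
          intro z hz
          rcases hz with h | h <;> rw [h]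
          · rw [SimpleGraph.dist_comm (u := x) (v := u), SimpleGraph.dist_comm (u := w) (v := u)]; omega
          · rw [SimpleGraph.dist_comm (u := x) (v := v)]; omega))
      simp only [ht, Set.mem_insert_iff, Set.mem_singleton_iff, Prod.mk.injEq]
      omega
    · intro x hx y hy hxy
      simp only [Prod.mk.injEq] at hxy
      exact hres' x y (by
        intro z hz
        rcases hz with h | h <;> rw [h]
        · rw [SimpleGraph.dist_comm (u := x), SimpleGraph.dist_comm (u := y)]; exact hxy.1
        · rw [SimpleGraph.dist_comm (u := x), SimpleGraph.dist_comm (u := y)]; exact hxy.2)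
  have ht5 : t.ncard ≤ 5 := by
    have e1 := Set.ncard_insert_le ((a-1,b+1)) ({(a+1,b-1),(a,b+1),(a+1,b),(a+1,b+1)} : Set (ℕ×ℕ))
    have e2 := Set.ncard_insert_le ((a+1,b-1)) ({(a,b+1),(a+1,b),(a+1,b+1)} : Set (ℕ×ℕ))
    have e3 := Set.ncard_insert_le ((a,b+1)) ({(a+1,b),(a+1,b+1)} : Set (ℕ×ℕ))
    have e4 := Set.ncard_insert_le ((a+1,b)) ({(a+1,b+1)} : Set (ℕ×ℕ))
    have e5 : ({(a+1,b+1)} : Set (ℕ×ℕ)).ncard = 1 := Set.ncard_singleton _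
    rw [ht]
    omega
  omega
end

section
/- Let S ⊆ D_{2n} be a generating set with e ∉ S = S^{-1} and |S| ≥ 4. Then the metric dimension of the Cayley graph Cay(D_{2n}, S) is at least 3. -/
open SimpleGraph

section Aux

variable {G : Type*} [Group G] {S : Set G}

lemma cayley_adj_of_mem (he : (1 : G) ∉ S) {s : G} (hs : s ∈ S) (v : G) :
    (cayley S).Adj (s * v) v := by
  refine ⟨?_, Or.inl (by simpa using hs)⟩
  intro h
  exact he (by simpa [mul_eq_right.mp h] using hs)

/-- Right multiplication as a graph hom of the Cayley graph. -/
def mulRightHom (S : Set G) (g : G) : cayley S →g cayley S where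
  toFun := fun x => x * g
  map_rel' := by
    rintro a b ⟨hne, h⟩
    refine ⟨by simpa using hne, ?_⟩
    rcases h with h | h
    · exact Or.inl (by simpa [mul_inv_rev, mul_assoc] using h)
    · exact Or.inr (by simpa [mul_inv_rev, mul_assoc] using h)

lemma cayley_reachable_mul {u v : G} (g : G) (h : (cayley S).Reachable u v) :
    (cayley S).Reachable (u * g) (v * g) :=
  h.map (mulRightHom S g)

lemma cayley_connected (hgen : Subgroup.closure S = ⊤) (he : (1 : G) ∉ S) :
    (cayley S).Connected := by
  have key : ∀ g : G, (cayley S).Reachable 1 g := by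
    intro g
    have hg : g ∈ Subgroup.closure S := by rw [hgen]; trivial
    induction hg using Subgroup.closure_induction with
    | mem x hx => simpa using (cayley_adj_of_mem he hx 1).symm.reachable
    | one => exact Reachable.refl _
    | mul x y hx hy ihx ihy =>
        have := cayley_reachable_mul y ihx
        simpa using ihy.trans (by simpa using this)
    | inv x hx ihx =>
        have := cayley_reachable_mul x⁻¹ ihx
        simpa using this.symm
  have : Nonempty G := ⟨1⟩
  exact ⟨fun u v => (key u).symm.trans (key v)⟩

end Aux

lemma resolving_three (n : ℕ) (hn : 1 ≤ n) (S : Set (DihedralGroup n))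
    (hgen : Subgroup.closure S = ⊤) (he : (1 : DihedralGroup n) ∉ S)
    (hcard : 4 ≤ S.ncard) (W : Set (DihedralGroup n))
    (hW : IsResolving (cayley S) W) : 3 ≤ W.ncard := by
  haveI : NeZero n := ⟨by omega⟩
  have hconn := cayley_connected hgen he
  classical
  by_contra hlt
  push_neg at hlt
  have hfin : W.Finite := Set.toFinite W
  obtain ⟨w1, w2, hsub⟩ : ∃ w1 w2, W ⊆ {w1, w2} := by
    have h3 : W.ncard = 0 ∨ W.ncard = 1 ∨ W.ncard = 2 := by omega
    rcases h3 with h0 | h1 | h2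
    · exact ⟨1, 1, by simp [(Set.ncard_eq_zero hfin).mp h0]⟩
    · obtain ⟨a, ha⟩ := Set.ncard_eq_one.mp h1
      exact ⟨a, a, by simp [ha]⟩
    · obtain ⟨a, b, _, hab⟩ := Set.ncard_eq_two.mp h2
      exact ⟨a, b, by simp [hab]⟩
  set d := (cayley S).dist w1 w2 with hd
  have hSfin : S.Finite := Set.toFinite S
  set T : Finset (DihedralGroup n) := hSfin.toFinset.image (· * w1) with hT
  have hTcard : 4 ≤ T.card := by
    rw [hT, Finset.card_image_of_injective _ (mul_left_injective w1)]
    rwa [Set.ncard_eq_toFinset_card _ hSfin] at hcard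
  have hone : ∀ x ∈ T, (cayley S).dist x w1 = 1 := by
    intro x hx
    rw [hT, Finset.mem_image] at hx
    obtain ⟨s, hs, rfl⟩ := hx
    rw [Set.Finite.mem_toFinset] at hs
    exact dist_eq_one_iff_adj.mpr (cayley_adj_of_mem he hs w1)
  have hmap : ∀ x ∈ T, (cayley S).dist x w2 ∈ Finset.Icc (d - 1) (d + 1) := by
    intro x hx
    have h1 := hone x hx
    have t1 := hconn.dist_triangle (u := x) (v := w1) (w := w2)
    have t2 := hconn.dist_triangle (u := w1) (v := x) (w := w2)
    rw [dist_comm (u := w1) (v := x)] at t2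
    rw [Finset.mem_Icc]
    omega
  have hcardIcc : (Finset.Icc (d - 1) (d + 1)).card < T.card := by
    rw [Nat.card_Icc]
    omega
  obtain ⟨x, hx, y, hy, hxy, hdist⟩ :=
    Finset.exists_ne_map_eq_of_card_lt_of_maps_to hcardIcc hmap
  apply hxy
  apply hW x y
  intro w hw
  rcases hsub hw with rfl | hw2
  · rw [hone x hx, hone y hy]
  · rw [Set.mem_singleton_iff] at hw2
    subst hw2
    exact hdist

theorem stmt_10 (n : ℕ) (hn : 1 ≤ n) (S : Set (DihedralGroup n))
    (hgen : Subgroup.closure S = ⊤) (he : (1 : DihedralGroup n) ∉ S)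
    (hsymm : S⁻¹ = S) (hcard : 4 ≤ S.ncard) :
    3 ≤ metricDim (cayley S) := by
  have hconn := cayley_connected hgen he
  have huniv : IsResolving (cayley S) Set.univ := by
    intro u v h
    have h0 := h u (Set.mem_univ u)
    rw [SimpleGraph.dist_self] at h0
    exact (hconn.dist_eq_zero_iff.mp h0.symm).symm
  refine le_csInf ⟨Set.univ.ncard, Set.univ, rfl, huniv⟩ ?_
  rintro b ⟨W, rfl, hW⟩
  exact resolving_three n hn S hgen he hcard W hW
end

section
/- Let n be even and S = {a^{n/2}, a^i·b, a^j·b} ⊆ D_{2n} with gcd(i - j, n) = 1. Then the Cayley graph Cay(D_{2n}, S) is isomorphic to the Möbius ladder M_{2n}, i.e., the graph on the cycle C_{2n} with additional edges joining each pair of antipodal vertices. -/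
open SimpleGraph

/-- The Möbius ladder on `2 * m` vertices: the cycle `C_{2m}` together with
edges joining each pair of antipodal vertices. -/
def mobiusLadder (m : ℕ) : SimpleGraph (ZMod (2 * m)) :=
  SimpleGraph.fromRel (fun x y => x - y = 1 ∨ x - y = (m : ZMod (2 * m)))

namespace Stmt15Aux

open DihedralGroup

theorem inv_r (n : ℕ) (a : ZMod n) : (r a : DihedralGroup n)⁻¹ = r (-a) := by
  apply inv_eq_of_mul_eq_one_left; simp [one_def, -r_zero]

theorem inv_sr (n : ℕ) (a : ZMod n) : (sr a : DihedralGroup n)⁻¹ = sr a := by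
  apply inv_eq_of_mul_eq_one_left; simp [one_def, -r_zero]

theorem r_one_zpow (n : ℕ) (k : ℤ) : (r 1 : DihedralGroup n) ^ k = r (k : ZMod n) := by
  induction k using Int.induction_on with
  | zero => simp [one_def, -r_zero]
  | succ m ih => rw [zpow_add_one, ih]; push_cast; simp
  | pred m ih => rw [zpow_sub_one, ih, inv_r]; push_cast; simp [sub_eq_add_neg]

def psi (n : ℕ) : ZMod n →+ ZMod (2*n) :=
  ZMod.lift n ⟨AddMonoidHom.mk' (fun k : ℤ => ((2*k : ℤ) : ZMod (2*n)))
    (by intros; push_cast; ring), by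
      have := ZMod.natCast_self (2*n)
      push_cast at this ⊢
      simpa using this⟩

lemma psi_coe (n : ℕ) (x : ℤ) : psi n (x : ZMod n) = ((2*x : ℤ) : ZMod (2*n)) :=
  ZMod.lift_coe _ _ _

lemma two_dvd_key (n : ℕ) (a b : ℤ) :
    (((2*a : ℤ) : ZMod (2*n)) = ((2*b : ℤ) : ZMod (2*n))) ↔ ((a : ZMod n) = (b : ZMod n)) := by
  rw [ZMod.intCast_eq_intCast_iff, ZMod.intCast_eq_intCast_iff, Int.modEq_iff_dvd,
    Int.modEq_iff_dvd]
  push_cast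
  constructor
  · rintro ⟨t, ht⟩; exact ⟨t, by linarith⟩
  · rintro ⟨t, ht⟩; exact ⟨t, by linarith⟩

lemma psi_eq_cast (n : ℕ) (x : ZMod n) (b : ℤ) :
    psi n x = ((2*b : ℤ) : ZMod (2*n)) ↔ x = ((b : ℤ) : ZMod n) := by
  obtain ⟨a, rfl⟩ := ZMod.intCast_surjective x
  rw [psi_coe, two_dvd_key]

lemma psi_eq_psi (n : ℕ) (x y : ZMod n) : psi n x = psi n y ↔ x = y := by
  obtain ⟨a, rfl⟩ := ZMod.intCast_surjective x
  obtain ⟨b, rfl⟩ := ZMod.intCast_surjective y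
  rw [psi_coe, psi_coe, two_dvd_key]

lemma psi_ne_odd (n : ℕ) (x : ZMod n) (t : ℤ) (ht : Odd t) :
    psi n x ≠ (t : ZMod (2*n)) := by
  obtain ⟨a, rfl⟩ := ZMod.intCast_surjective x
  rw [psi_coe, ne_eq, ZMod.intCast_eq_intCast_iff, Int.modEq_iff_dvd]
  intro h
  have h2 : (2 : ℤ) ∣ t - 2*a := dvd_trans ⟨(n : ℤ), by push_cast; ring⟩ h
  obtain ⟨s, hs⟩ := h2
  obtain ⟨u, hu⟩ := ht
  omega

lemma psi_ne_one (n : ℕ) (x : ZMod n) : psi n x ≠ 1 := by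
  have := psi_ne_odd n x 1 odd_one
  simpa using this

lemma psi_ne_odd' (n : ℕ) (x : ZMod n) (b : ℤ) :
    psi n x ≠ ((2*b + 1 : ℤ) : ZMod (2*n)) :=
  psi_ne_odd n x _ ⟨b, by ring⟩

lemma psi_eq_zero (n : ℕ) (x : ZMod n) : psi n x = 0 ↔ x = 0 := by
  have := psi_eq_cast n x 0
  simpa using this

/-- The vertex bijection. -/
def phi (n : ℕ) (e' i' : ZMod n) : DihedralGroup n → ZMod (2*n)
  | .r k => psi n (k * e')
  | .sr k => psi n ((k + i') * e') + 1

@[simp] lemma phi_r (n : ℕ) (e' i' k : ZMod n) :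
    phi n e' i' (r k) = psi n (k * e') := rfl

@[simp] lemma phi_sr (n : ℕ) (e' i' k : ZMod n) :
    phi n e' i' (sr k) = psi n ((k + i') * e') + 1 := rfl

end Stmt15Aux

open Stmt15Aux DihedralGroup

theorem stmt_15 (n : ℕ) (hn : 1 ≤ n) (hev : Even n) (i j : ℤ)
    (hg : Int.gcd (i - j) (n : ℤ) = 1) :
    Nonempty (cayley
      ({A n ^ (n / 2), A n ^ i * B n, A n ^ j * B n} : Set (DihedralGroup n)) ≃g
      mobiusLadder n) := by
  haveI : NeZero n := ⟨by omega⟩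
  haveI : NeZero (2*n) := ⟨by omega⟩
  -- Bezout data
  obtain ⟨u, v, huv⟩ := Int.isCoprime_iff_gcd_eq_one.mpr hg
  have hbez : (j - i) * (-u) + v * (n : ℤ) = 1 := by linarith
  obtain ⟨w2, hw2⟩ : ∃ w2 : ℤ, (n : ℤ) = 2 * w2 := ⟨(n/2 : ℕ), by
    have := hev.two_dvd; omega⟩
  set E : ℤ := -u with hE
  have hdodd : Odd (j - i) := by
    rcases Int.even_or_odd (j - i) with h | h
    · obtain ⟨s, hs⟩ := h
      exfalso
      have : (1:ℤ) = 2*(s*E + v*w2) := by rw [← hbez, hs, hw2]; ring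
      omega
    · exact h
  have hEodd : Odd E := by
    rcases Int.even_or_odd E with h | h
    · obtain ⟨s, hs⟩ := h
      exfalso
      have : (1:ℤ) = 2*((j-i)*s + v*w2) := by rw [← hbez, hs, hw2]; ring
      omega
    · exact h
  -- ZMod n constants
  set c : ZMod n := ((n/2 : ℕ) : ZMod n) with hc
  set d' : ZMod n := ((j - i : ℤ) : ZMod n) with hd'
  set e' : ZMod n := ((E : ℤ) : ZMod n) with he'def
  obtain ⟨m0, hm0⟩ : ∃ m, n = 2 * m := by
    obtain ⟨m, hm⟩ := hev; exact ⟨m, by omega⟩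
  have hdiv : n / 2 = m0 := by omega
  have he' : d' * e' = 1 :=
    calc d' * e' = (((j - i) * E : ℤ) : ZMod n) := by
          rw [hd', he'def, Int.cast_mul]
      _ = ((1 - v * (n:ℤ) : ℤ) : ZMod n) := by
          rw [show ((1 : ℤ) - v * (n:ℤ)) = (j - i) * E from by linarith]
      _ = 1 := by
          rw [Int.cast_sub, Int.cast_mul, Int.cast_natCast, ZMod.natCast_self,
            Int.cast_one, mul_zero, sub_zero]
  have hcm : c = (m0 : ZMod n) := by rw [hc, hdiv]
  have hc2 : c * 2 = 0 := by
    have h1 : ((n/2 * 2 : ℕ) : ZMod n) = ((n : ℕ) : ZMod n) := by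
      rw [Nat.div_mul_cancel hev.two_dvd]
    rw [ZMod.natCast_self] at h1
    push_cast at h1
    rw [hc]; linear_combination h1
  have hnegc : -c = c := by linear_combination -hc2
  have hcne : c ≠ 0 := by
    rw [hc, Ne, ZMod.natCast_eq_zero_iff]
    intro h
    have := Nat.le_of_dvd (by omega) h
    omega
  have hc_mul : ∀ z : ℤ, Odd z → c * ((z : ℤ) : ZMod n) = c := by
    intro z ⟨s, hs⟩
    subst hs
    push_cast
    linear_combination ((s : ZMod n)) * hc2
  have hcancel : ∀ x y : ZMod n, x * e' = y ↔ x = y * d' := by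
    intro x y
    constructor
    · intro h; linear_combination d' * h - x * he'
    · intro h; linear_combination e' * h + y * he'
  have hc_muld : c * d' = c := by rw [hd']; exact hc_mul _ hdodd
  have hc_mule : c * e' = c := by rw [he'def]; exact hc_mul _ hEodd
  -- notation
  set S : Set (DihedralGroup n) := {A n ^ (n / 2), A n ^ i * B n, A n ^ j * B n} with hSdef
  have hS1 : A n ^ (n / 2) = r c := by rw [A, r_one_pow]
  have hS2 : A n ^ i * B n = sr (-(i : ZMod n)) := by
    rw [A, B, Stmt15Aux.r_one_zpow, r_mul_sr, zero_sub]
  have hS3 : A n ^ j * B n = sr (-(j : ZMod n)) := by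
    rw [A, B, Stmt15Aux.r_one_zpow, r_mul_sr, zero_sub]
  set φ := phi n e' (i : ZMod n) with hφ
  -- the natural number n as element of ZMod (2n), as a "2*b" cast
  have hN : ((n : ℕ) : ZMod (2*n)) = ((2 * (m0 : ℤ) : ℤ) : ZMod (2*n)) := by
    have h1 : ((2 * (m0 : ℤ) : ℤ) : ZMod (2*n)) = ((2 * m0 : ℕ) : ZMod (2*n)) := by
      push_cast; ring
    rw [h1, ← hm0]
  -- injectivity
  have hinj : Function.Injective φ := by
    rintro (k | k) (l | l) h <;>
      simp only [hφ, phi_r, phi_sr] at h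
    · rw [psi_eq_psi] at h
      have : k = l := by linear_combination d' * h - (k - l) * he'
      rw [this]
    · exfalso
      have : psi n (k * e') - psi n ((l + (i:ZMod n)) * e') = 1 := by
        linear_combination h
      rw [← map_sub] at this
      exact psi_ne_one n _ this
    · exfalso
      have : psi n (l * e') - psi n ((k + (i:ZMod n)) * e') = 1 := by
        linear_combination -h
      rw [← map_sub] at this
      exact psi_ne_one n _ this
    · have h' : psi n ((k + (i:ZMod n)) * e') = psi n ((l + (i:ZMod n)) * e') := by
        linear_combination h
      rw [psi_eq_psi] at h'
      have : k = l := by linear_combination d' * h' - (k - l) * he'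
      rw [this]
  have hbij : Function.Bijective φ :=
    (Fintype.bijective_iff_injective_and_card φ).mpr
      ⟨hinj, by rw [DihedralGroup.card, ZMod.card]⟩
  -- adjacency characterizations
  -- r-r
  have hrr : ∀ k l : ZMod n,
      ((mobiusLadder n).Adj (φ (r k)) (φ (r l)) ↔ (cayley S).Adj (r k) (r l)) := by
    intro k l
    have e1 : φ (r k) - φ (r l) = psi n ((k - l) * e') := by
      simp only [hφ, phi_r, ← map_sub]; congr 1; ring
    have e2 : φ (r l) - φ (r k) = psi n ((l - k) * e') := by
      simp only [hφ, phi_r, ← map_sub]; congr 1; ring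
    have hcay : (cayley S).Adj (r k) (r l) ↔ k - l = c := by
      rw [cayley, SimpleGraph.fromRel_adj, Stmt15Aux.inv_r, r_mul_r, Stmt15Aux.inv_r, r_mul_r,
        hSdef]
      simp only [hS1, hS2, hS3, Set.mem_insert_iff, Set.mem_singleton_iff,
        DihedralGroup.r.injEq, reduceCtorEq, or_false, ne_eq]
      constructor
      · rintro ⟨hne, h | h⟩
        · linear_combination h
        · linear_combination -h - hc2
      · intro h
        refine ⟨?_, Or.inl (by linear_combination h)⟩
        intro he
        have : k = l := by simpa using he
        rw [this, sub_self] at h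
        exact hcne h.symm
      -- done
    have hmob : (mobiusLadder n).Adj (φ (r k)) (φ (r l)) ↔ k - l = c := by
      rw [mobiusLadder, SimpleGraph.fromRel_adj, e1, e2, hN]
      constructor
      · rintro ⟨hne, (h | h) | (h | h)⟩
        · exact absurd h (psi_ne_one n _)
        · rw [psi_eq_cast, Int.cast_natCast, ← hcm] at h
          have h2 := (hcancel _ _).mp h
          rw [hc_muld] at h2
          exact h2
        · exact absurd h (psi_ne_one n _)
        · rw [psi_eq_cast, Int.cast_natCast, ← hcm] at h
          have h2 := (hcancel _ _).mp h
          rw [hc_muld] at h2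
          linear_combination -h2 - hc2
      · intro h
        have harg : (k - l) * e' = c := by
          rw [h]; exact hc_mule
        refine ⟨?_, Or.inl (Or.inr ?_)⟩
        · intro he
          have h0 : psi n ((k - l) * e') = 0 := by
            rw [← e1, he, sub_self]
          rw [psi_eq_zero, harg] at h0
          exact hcne h0
        · rw [psi_eq_cast, Int.cast_natCast, ← hcm]
          exact harg
    rw [hmob, hcay]
  -- sr-sr
  have hss : ∀ k l : ZMod n,
      ((mobiusLadder n).Adj (φ (sr k)) (φ (sr l)) ↔ (cayley S).Adj (sr k) (sr l)) := by
    intro k l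
    have e1 : φ (sr k) - φ (sr l) = psi n ((k - l) * e') := by
      simp only [hφ, phi_sr]
      rw [show psi n ((k + (i:ZMod n)) * e') + 1 - (psi n ((l + (i:ZMod n)) * e') + 1)
          = psi n ((k + (i:ZMod n)) * e') - psi n ((l + (i:ZMod n)) * e') by ring,
        ← map_sub]
      congr 1; ring
    have e2 : φ (sr l) - φ (sr k) = psi n ((l - k) * e') := by
      simp only [hφ, phi_sr]
      rw [show psi n ((l + (i:ZMod n)) * e') + 1 - (psi n ((k + (i:ZMod n)) * e') + 1)
          = psi n ((l + (i:ZMod n)) * e') - psi n ((k + (i:ZMod n)) * e') by ring,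
        ← map_sub]
      congr 1; ring
    have hcay : (cayley S).Adj (sr k) (sr l) ↔ k - l = c := by
      rw [cayley, SimpleGraph.fromRel_adj, Stmt15Aux.inv_sr, sr_mul_sr, Stmt15Aux.inv_sr, sr_mul_sr,
        hSdef]
      simp only [hS1, hS2, hS3, Set.mem_insert_iff, Set.mem_singleton_iff,
        DihedralGroup.r.injEq, reduceCtorEq, or_false, false_or, ne_eq]
      constructor
      · rintro ⟨hne, h | h⟩
        · linear_combination -h - hc2
        · linear_combination h
      · intro h
        refine ⟨?_, Or.inr (by linear_combination h)⟩
        intro he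
        have : k = l := by simpa using he
        rw [this, sub_self] at h
        exact hcne h.symm
    have hmob : (mobiusLadder n).Adj (φ (sr k)) (φ (sr l)) ↔ k - l = c := by
      rw [mobiusLadder, SimpleGraph.fromRel_adj, e1, e2, hN]
      constructor
      · rintro ⟨hne, (h | h) | (h | h)⟩
        · exact absurd h (psi_ne_one n _)
        · rw [psi_eq_cast, Int.cast_natCast, ← hcm] at h
          have h2 := (hcancel _ _).mp h
          rw [hc_muld] at h2
          exact h2
        · exact absurd h (psi_ne_one n _)
        · rw [psi_eq_cast, Int.cast_natCast, ← hcm] at h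
          have h2 := (hcancel _ _).mp h
          rw [hc_muld] at h2
          linear_combination -h2 - hc2
      · intro h
        have harg : (k - l) * e' = c := by
          rw [h]; exact hc_mule
        refine ⟨?_, Or.inl (Or.inr ?_)⟩
        · intro he
          have h0 : psi n ((k - l) * e') = 0 := by
            rw [← e1, he, sub_self]
          rw [psi_eq_zero, harg] at h0
          exact hcne h0
        · rw [psi_eq_cast, Int.cast_natCast, ← hcm]
          exact harg
    rw [hmob, hcay]
  -- r-sr
  have hrs : ∀ k m : ZMod n,
      ((mobiusLadder n).Adj (φ (r k)) (φ (sr m)) ↔ (cayley S).Adj (r k) (sr m)) := by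
    intro k m
    have e1 : φ (r k) - φ (sr m) = psi n ((k - m - (i:ZMod n)) * e') - 1 := by
      simp only [hφ, phi_r, phi_sr]
      rw [show psi n (k * e') - (psi n ((m + (i:ZMod n)) * e') + 1)
          = psi n (k * e') - psi n ((m + (i:ZMod n)) * e') - 1 by ring, ← map_sub]
      congr 2; ring
    have e2 : φ (sr m) - φ (r k) = 1 - psi n ((k - m - (i:ZMod n)) * e') := by
      linear_combination -e1
    have hcay : (cayley S).Adj (r k) (sr m) ↔
        (m - k = -(i:ZMod n) ∨ m - k = -(j:ZMod n)) := by
      rw [cayley, SimpleGraph.fromRel_adj, Stmt15Aux.inv_sr, r_mul_sr, Stmt15Aux.inv_r, sr_mul_r,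
        hSdef]
      simp only [hS1, hS2, hS3, Set.mem_insert_iff, Set.mem_singleton_iff,
        DihedralGroup.sr.injEq, reduceCtorEq, false_or, ne_eq]
      constructor
      · rintro ⟨hne, h | h⟩
        · rcases h with h | h
          · exact Or.inl (by linear_combination h)
          · exact Or.inr (by linear_combination h)
        · rcases h with h | h
          · exact Or.inl (by linear_combination h)
          · exact Or.inr (by linear_combination h)
      · intro h
        refine ⟨by simp, Or.inl ?_⟩
        rcases h with h | h
        · exact Or.inl (by linear_combination h)
        · exact Or.inr (by linear_combination h)
    have hmob : (mobiusLadder n).Adj (φ (r k)) (φ (sr m)) ↔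
        (m - k = -(i:ZMod n) ∨ m - k = -(j:ZMod n)) := by
      rw [mobiusLadder, SimpleGraph.fromRel_adj, e1, e2, hN]
      constructor
      · rintro ⟨hne, (h | h) | (h | h)⟩
        · -- psi w - 1 = 1, so psi w = 2 = 2*1
          have h2 : psi n ((k - m - (i:ZMod n)) * e') = ((2*1 : ℤ) : ZMod (2*n)) := by
            rw [show ((2*1 : ℤ) : ZMod (2*n)) = 2 from by norm_num]
            linear_combination h
          rw [psi_eq_cast, Int.cast_one] at h2
          have h3 := (hcancel _ _).mp h2
          rw [one_mul, hd'] at h3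
          push_cast at h3
          exact Or.inr (by linear_combination -h3)
        · -- psi w - 1 = n : psi w = 2*(n/2) + 1, impossible
          exfalso
          have h2 : psi n ((k - m - (i:ZMod n)) * e')
              = ((2*(m0 : ℤ) + 1 : ℤ) : ZMod (2*n)) := by
            rw [Int.cast_add, Int.cast_one]
            linear_combination h
          exact psi_ne_odd' n _ _ h2
        · -- 1 - psi w = 1 : psi w = 0
          have h2 : psi n ((k - m - (i:ZMod n)) * e') = 0 := by linear_combination -h
          rw [psi_eq_zero] at h2
          have h3 := (hcancel _ _).mp h2
          rw [zero_mul] at h3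
          exact Or.inl (by linear_combination -h3)
        · -- 1 - psi w = n : psi w = 1 - n = 2*(-(n/2)) + 1
          exfalso
          have h2 : psi n ((k - m - (i:ZMod n)) * e')
              = ((2*(-(m0 : ℤ)) + 1 : ℤ) : ZMod (2*n)) := by
            rw [show ((2*(-(m0 : ℤ)) + 1 : ℤ) : ZMod (2*n))
              = -((2*(m0:ℤ) : ℤ) : ZMod (2*n)) + 1 from by push_cast; ring]
            linear_combination -h
          exact psi_ne_odd' n _ _ h2
      · intro h
        have hne : φ (r k) ≠ φ (sr m) := by
          intro he
          have h1 : psi n ((k - m - (i:ZMod n)) * e') = 1 := by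
            have := sub_eq_zero.mpr he
            rw [e1] at this
            linear_combination this
          exact psi_ne_one n _ h1
        rcases h with h | h
        · -- m - k = -i, i.e. k - m - i = 0, psi w = 0, so φ(sr m) - φ(r k) = 1
          refine ⟨hne, Or.inr (Or.inl ?_)⟩
          have h0 : (k - m - (i:ZMod n)) * e' = 0 := by
            rw [show k - m - (i:ZMod n) = 0 by linear_combination -h, zero_mul]
          rw [h0, map_zero, sub_zero]
        · -- m - k = -j : k - m - i = j - i = d', w = d'*e' = 1... psi w = 2
          refine ⟨hne, Or.inl (Or.inl ?_)⟩
          have h0 : (k - m - (i:ZMod n)) * e' = ((1 : ℤ) : ZMod n) := by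
            rw [Int.cast_one]
            have hkm : k - m - (i:ZMod n) = d' := by
              rw [hd']; push_cast; linear_combination -h
            rw [hkm]; exact he'
          have h2 : psi n ((k - m - (i:ZMod n)) * e') = ((2*1 : ℤ) : ZMod (2*n)) := by
            rw [psi_eq_cast]
            exact h0
          rw [h2, show ((2*1 : ℤ) : ZMod (2*n)) = 2 from by norm_num]
          ring
    rw [hmob, hcay]
  -- assemble
  refine ⟨⟨Equiv.ofBijective φ hbij, ?_⟩⟩
  rintro (k | k) (l | l)
  · exact hrr k l
  · exact hrs k l
  · rw [SimpleGraph.adj_comm, SimpleGraph.adj_comm (cayley S)]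
    exact hrs l k
  · exact hss k l
end

section
/- Let n ≡ 2 (mod 4), n ≥ 6, and let x = a^i·b, y = a^j·b in D_{2n} with the order of xy equal to n/2 and with {a^{n/2}, x, y} generating D_{2n}. Then Cay(D_{2n}, {a^{n/2}, x, y}) is isomorphic to the prism P_2 × C_n. -/
open SimpleGraph

namespace Stmt16Aux

open DihedralGroup

lemma r_inv' {n : ℕ} (c : ZMod n) : (r c)⁻¹ = r (-c) := rfl

lemma sr_inv' {n : ℕ} (c : ZMod n) : (sr c)⁻¹ = sr c := rfl

lemma r_pow' {n : ℕ} (c : ZMod n) (k : ℕ) : (r c : DihedralGroup n) ^ k = r (k • c) := by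
  induction k with
  | zero => rw [pow_zero, zero_nsmul, one_def]
  | succ k ih => rw [pow_succ, ih, r_mul_r, succ_nsmul]

lemma r_zpow' {n : ℕ} (c : ZMod n) (k : ℤ) : (r c : DihedralGroup n) ^ k = r (k • c) := by
  cases k with
  | ofNat k => rw [Int.ofNat_eq_coe, zpow_natCast, r_pow', natCast_zsmul]
  | negSucc k => rw [zpow_negSucc, r_pow', r_inv', negSucc_zsmul]

lemma A_zpow {n : ℕ} (c : ℤ) : (A n) ^ c = r (c : ZMod n) := by
  rw [show A n = r 1 from rfl, r_zpow']
  congr 1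
  rw [zsmul_eq_mul, mul_one]

/-- small integer multiple of `m` in a window is 0 or `-m` -/
lemma dvd_window {m : ℕ} {δ : ℤ} (hm3 : 3 ≤ m) (h : (m:ℤ) ∣ δ) (h1 : -m ≤ δ) (h2 : δ < m) :
    δ = 0 ∨ δ = -m := by
  obtain ⟨c, rfl⟩ := h
  have hm0 : (0:ℤ) < m := by omega
  have hc1 : -1 ≤ c := by
    by_contra hc
    push_neg at hc
    nlinarith
  have hc2 : c ≤ 0 := by
    by_contra hc
    push_neg at hc
    nlinarith
  interval_cases c
  · right; ring
  · left; ring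

lemma dvd_small {m : ℕ} {a b : ℕ} (hm3 : 3 ≤ m) (ha : a < m) (hb : b < m)
    (h : (m:ℤ) ∣ (a:ℤ) - b) : a = b := by
  obtain ⟨c, hc⟩ := h
  have hm0 : (0:ℤ) < m := by omega
  have hc1 : -1 < c := by
    by_contra hcc
    push_neg at hcc
    nlinarith
  have hc2 : c < 1 := by
    by_contra hcc
    push_neg at hcc
    nlinarith
  have hc0 : c = 0 := by omega
  rw [hc0, mul_zero] at hc
  omega

section Main

variable {n m : ℕ} {e : ZMod n}

/-- the rotation amount of vertex `(ε, 2s)` resp. `(ε, 2s+1)` -/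
def T (n m : ℕ) (e : ZMod n) (ε : Fin 2) (s : ℕ) : ZMod n :=
  ((ε.val * m : ℕ) : ZMod n) + ((s : ℕ) : ZMod n) * e

/-- the vertex map from the prism to the Cayley graph -/
def F (n m : ℕ) (p e : ZMod n) (w : Fin 2 × Fin n) : DihedralGroup n :=
  if w.2.val % 2 = 0 then r (T n m e w.1 (w.2.val / 2))
  else sr (p + T n m e w.1 (w.2.val / 2))

variable (hm2 : n = 2 * m) (hmodd : m % 2 = 1) (hm3 : 3 ≤ m)
variable (hme : ((m : ℕ) : ZMod n) * e = 0)
variable (hdvd : ∀ c : ℤ, ((c : ℤ) : ZMod n) * e = 0 → (m:ℤ) ∣ c)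
variable (hne : ∀ c : ℤ, ((c : ℤ) : ZMod n) * e ≠ ((m:ℕ) : ZMod n))

include hm2 hm3 in
lemma m_ne : ((m:ℕ) : ZMod n) ≠ 0 := by
  haveI : NeZero n := ⟨by omega⟩
  rw [Ne, ZMod.natCast_eq_zero_iff]
  intro hd
  have := Nat.le_of_dvd (by omega) hd
  omega

include hm2 in
lemma m_neg : -((m:ℕ) : ZMod n) = ((m:ℕ) : ZMod n) := by
  have h : ((2 * m : ℕ) : ZMod n) = 0 := by rw [← hm2]; exact ZMod.natCast_self n
  push_cast at h
  linear_combination -h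

include hm2 hme hdvd hne in
lemma E0 (ε ε' : Fin 2) (δ : ℤ) :
    ((ε.val * m : ℕ) : ZMod n) + ((δ : ℤ) : ZMod n) * e = ((ε'.val * m : ℕ) : ZMod n) ↔
      ε = ε' ∧ (m:ℤ) ∣ δ := by
  constructor
  · intro h
    fin_cases ε <;> fin_cases ε' <;> push_cast at h
    · exact ⟨rfl, hdvd δ (by linear_combination h)⟩
    · exact absurd (show ((δ : ℤ) : ZMod n) * e = ((m:ℕ) : ZMod n) by linear_combination h)
        (hne δ)
    · exact absurd (show ((-δ : ℤ) : ZMod n) * e = ((m:ℕ) : ZMod n) by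
        push_cast; linear_combination -h) (hne (-δ))
    · exact ⟨rfl, hdvd δ (by linear_combination h)⟩
  · rintro ⟨rfl, c, rfl⟩
    push_cast
    linear_combination ((c : ℤ) : ZMod n) * hme

include hm2 hme hdvd hne in
lemma E1 (ε ε' : Fin 2) (δ : ℤ) :
    ((ε.val * m : ℕ) : ZMod n) + ((δ : ℤ) : ZMod n) * e
        = ((ε'.val * m : ℕ) : ZMod n) + ((m:ℕ) : ZMod n) ↔
      ε ≠ ε' ∧ (m:ℤ) ∣ δ := by
  constructor
  · intro h
    fin_cases ε <;> fin_cases ε' <;> push_cast at h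
    · exact absurd (show ((δ : ℤ) : ZMod n) * e = ((m:ℕ) : ZMod n) by linear_combination h)
        (hne δ)
    · exact ⟨by decide, hdvd δ (by linear_combination h - m_neg hm2)⟩
    · exact ⟨by decide, hdvd δ (by linear_combination h)⟩
    · exact absurd (show ((δ : ℤ) : ZMod n) * e = ((m:ℕ) : ZMod n) by linear_combination h)
        (hne δ)
  · rintro ⟨hee, c, rfl⟩
    fin_cases ε <;> fin_cases ε'
    · exact absurd rfl hee
    · push_cast
      linear_combination ((c : ℤ) : ZMod n) * hme + m_neg hm2
    · push_cast
      linear_combination ((c : ℤ) : ZMod n) * hme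
    · exact absurd rfl hee

include hm2 hm3 hme hdvd hne in
lemma LT {ε ε' : Fin 2} {s s' : ℕ} (hs : s < m) (hs' : s' < m) :
    T n m e ε s = T n m e ε' s' ↔ ε = ε' ∧ s = s' := by
  have key : T n m e ε s = T n m e ε' s' ↔
      ((ε.val * m : ℕ) : ZMod n) + (((s:ℤ) - s' : ℤ) : ZMod n) * e
        = ((ε'.val * m : ℕ) : ZMod n) := by
    unfold T
    constructor <;> intro h <;> push_cast at h ⊢ <;> linear_combination h
  rw [key, E0 hm2 hme hdvd hne]
  constructor
  · rintro ⟨h1, h2⟩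
    exact ⟨h1, dvd_small hm3 hs hs' h2⟩
  · rintro ⟨h1, rfl⟩
    exact ⟨h1, ⟨0, by ring⟩⟩

include hm2 hm3 hme hdvd hne in
lemma LA {ε ε' : Fin 2} {s s' : ℕ} (hs : s < m) (hs' : s' < m) :
    T n m e ε s = T n m e ε' s' + ((m:ℕ) : ZMod n) ↔ ε ≠ ε' ∧ s = s' := by
  have key : T n m e ε s = T n m e ε' s' + ((m:ℕ) : ZMod n) ↔
      ((ε.val * m : ℕ) : ZMod n) + (((s:ℤ) - s' : ℤ) : ZMod n) * e
        = ((ε'.val * m : ℕ) : ZMod n) + ((m:ℕ) : ZMod n) := by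
    unfold T
    constructor <;> intro h <;> push_cast at h ⊢ <;> linear_combination h
  rw [key, E1 hm2 hme hdvd hne]
  constructor
  · rintro ⟨h1, h2⟩
    exact ⟨h1, dvd_small hm3 hs hs' h2⟩
  · rintro ⟨h1, rfl⟩
    exact ⟨h1, ⟨0, by ring⟩⟩

include hm2 hm3 hme hdvd hne in
lemma LB {ε ε' : Fin 2} {s s' : ℕ} (hs : s < m) (hs' : s' < m) :
    T n m e ε s = T n m e ε' s' + e ↔
      ε = ε' ∧ (s = s' + 1 ∨ (s = 0 ∧ s' = m - 1)) := by
  have key : T n m e ε s = T n m e ε' s' + e ↔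
      ((ε.val * m : ℕ) : ZMod n) + (((s:ℤ) - s' - 1 : ℤ) : ZMod n) * e
        = ((ε'.val * m : ℕ) : ZMod n) := by
    unfold T
    constructor <;> intro h <;> push_cast at h ⊢ <;> linear_combination h
  rw [key, E0 hm2 hme hdvd hne]
  constructor
  · rintro ⟨h1, h2⟩
    refine ⟨h1, ?_⟩
    rcases dvd_window hm3 h2 (by omega) (by omega) with h | h <;> [left; right] <;> omega
  · rintro ⟨h1, h2 | ⟨h2, h3⟩⟩
    · refine ⟨h1, ⟨0, by rw [h2]; push_cast; ring⟩⟩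
    · refine ⟨h1, ⟨-1, by rw [h2, h3]; push_cast; omega⟩⟩


include hm2 hmodd in
lemma m_sq : ((m:ℕ) : ZMod n) * ((m:ℕ) : ZMod n) = ((m:ℕ) : ZMod n) := by
  obtain ⟨t, ht⟩ : ∃ t, m = 2 * t + 1 := ⟨m / 2, by omega⟩
  have hnat : m * m = m + n * t := by rw [hm2, ht]; ring
  have hc := congrArg (Nat.cast : ℕ → ZMod n) hnat
  push_cast at hc
  linear_combination hc + ((t : ℕ) : ZMod n) * ZMod.natCast_self n

include hm2 hmodd hm3 hme in
lemma Hne : ∀ c : ℤ, ((c : ℤ) : ZMod n) * e ≠ ((m:ℕ) : ZMod n) := by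
  intro c h
  apply m_ne hm2 hm3
  linear_combination ((c:ℤ) : ZMod n) * hme - ((m:ℕ) : ZMod n) * h - m_sq hm2 hmodd

include hm2 hm3 hme hdvd hne in
lemma F_inj (p : ZMod n) : Function.Injective (F n m p e) := by
  rintro ⟨ε, k⟩ ⟨ε', k'⟩ h
  have hk : k.val < 2 * m := by rw [← hm2]; exact k.isLt
  have hk' : k'.val < 2 * m := by rw [← hm2]; exact k'.isLt
  have hs : k.val / 2 < m := by omega
  have hs' : k'.val / 2 < m := by omega
  have hdm : 2 * (k.val / 2) + k.val % 2 = k.val := Nat.div_add_mod _ _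
  have hdm' : 2 * (k'.val / 2) + k'.val % 2 = k'.val := Nat.div_add_mod _ _
  by_cases h1 : k.val % 2 = 0 <;> by_cases h2 : k'.val % 2 = 0 <;>
    simp only [F, h1, h2, if_true, if_false, reduceIte] at h
  · rw [DihedralGroup.r.injEq] at h
    obtain ⟨he, hss⟩ := (LT hm2 hm3 hme hdvd hne hs hs').mp h
    exact Prod.ext_iff.mpr ⟨he, (Fin.ext (by omega : k.val = k'.val) : k = k')⟩
  · simp at h
  · simp at h
  · rw [DihedralGroup.sr.injEq] at h
    have h' : T n m e ε (k.val / 2) = T n m e ε' (k'.val / 2) := by linear_combination h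
    obtain ⟨he, hss⟩ := (LT hm2 hm3 hme hdvd hne hs hs').mp h'
    exact Prod.ext_iff.mpr ⟨he, (Fin.ext (by omega : k.val = k'.val) : k = k')⟩

end Main

lemma r_mul_r_inv {n : ℕ} (a b : ZMod n) : (r a : DihedralGroup n) * (r b)⁻¹ = r (a - b) := by
  rw [r_inv', r_mul_r, ← sub_eq_add_neg]

lemma r_mul_sr_inv {n : ℕ} (a b : ZMod n) : (r a : DihedralGroup n) * (sr b)⁻¹ = sr (b - a) := by
  rw [sr_inv', r_mul_sr]

lemma sr_mul_r_inv {n : ℕ} (a b : ZMod n) : (sr a : DihedralGroup n) * (r b)⁻¹ = sr (a - b) := by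
  rw [r_inv', sr_mul_r, ← sub_eq_add_neg]

lemma sr_mul_sr_inv {n : ℕ} (a b : ZMod n) : (sr a : DihedralGroup n) * (sr b)⁻¹ = r (b - a) := by
  rw [sr_inv', sr_mul_sr]

lemma cayley_adj {G : Type*} [Group G] (S : Set G) (u v : G) :
    (cayley S).Adj u v ↔ u ≠ v ∧ (u * v⁻¹ ∈ S ∨ v * u⁻¹ ∈ S) := by
  rw [cayley, SimpleGraph.fromRel_adj]

lemma cyc_adj {n : ℕ} (hn : 4 ≤ n) (k k' : Fin n) :
    (cycleGraph n).Adj k k' ↔ (k.val + 1 = k'.val ∨ k'.val + 1 = k.val ∨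
      (k.val = n - 1 ∧ k'.val = 0) ∨ (k'.val = n - 1 ∧ k.val = 0)) := by
  rw [cycleGraph_adj']
  have hmod : ∀ x : ℕ, x < 2 * n → (x % n = 1 ↔ (x = 1 ∨ x = n + 1)) := by
    intro x hx
    rcases Nat.lt_or_ge x n with h | h
    · rw [Nat.mod_eq_of_lt h]; omega
    · rw [Nat.mod_eq_sub_mod h, Nat.mod_eq_of_lt (by omega)]; omega
  rw [Fin.sub_def, Fin.sub_def]
  have hkl := k.isLt
  have hkl' := k'.isLt
  show (n - k'.val + k.val) % n = 1 ∨ (n - k.val + k'.val) % n = 1 ↔ _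
  rw [hmod _ (by omega), hmod _ (by omega)]
  omega

lemma main (n m : ℕ) (p q : ZMod n) (hm2 : n = 2 * m) (hmodd : m % 2 = 1) (hm3 : 3 ≤ m)
    (hme : ((m:ℕ) : ZMod n) * (p - q) = 0)
    (hdvd : ∀ c : ℤ, ((c : ℤ) : ZMod n) * (p - q) = 0 → (m:ℤ) ∣ c) :
    Nonempty (cayley ({r ((m:ℕ) : ZMod n), sr p, sr q} : Set (DihedralGroup n)) ≃g
      (pathGraph 2 □ cycleGraph n)) := by
  haveI : NeZero n := ⟨by omega⟩
  have hedef : (p - q : ZMod n) = p - q := rfl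
  have hne := Hne hm2 hmodd hm3 hme
  have hbij : Function.Bijective (F n m p (p - q)) := by
    rw [Fintype.bijective_iff_injective_and_card]
    refine ⟨F_inj hm2 hm3 hme hdvd hne p, ?_⟩
    simp [DihedralGroup.card, hm2]
  have hadj : ∀ a b : Fin 2 × Fin n,
      (cayley ({r ((m:ℕ) : ZMod n), sr p, sr q} : Set (DihedralGroup n))).Adj
        (F n m p (p - q) a) (F n m p (p - q) b) ↔ (pathGraph 2 □ cycleGraph n).Adj a b := by
    rintro ⟨ε, k⟩ ⟨ε', k'⟩
    have hk : k.val < 2 * m := by rw [← hm2]; exact k.isLt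
    have hk' : k'.val < 2 * m := by rw [← hm2]; exact k'.isLt
    have hs : k.val / 2 < m := by omega
    have hs' : k'.val / 2 < m := by omega
    have hdm : 2 * (k.val / 2) + k.val % 2 = k.val := Nat.div_add_mod _ _
    have hdm' : 2 * (k'.val / 2) + k'.val % 2 = k'.val := Nat.div_add_mod _ _
    have LT' := fun {a b : Fin 2} {c d : ℕ} (hc : c < m) (hd : d < m) =>
      LT (e := p - q) hm2 hm3 hme hdvd hne (ε := a) (ε' := b) (s := c) (s' := d) hc hd
    have LA' := fun {a b : Fin 2} {c d : ℕ} (hc : c < m) (hd : d < m) =>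
      LA (e := p - q) hm2 hm3 hme hdvd hne (ε := a) (ε' := b) (s := c) (s' := d) hc hd
    have LB' := fun {a b : Fin 2} {c d : ℕ} (hc : c < m) (hd : d < m) =>
      LB (e := p - q) hm2 hm3 hme hdvd hne (ε := a) (ε' := b) (s := c) (s' := d) hc hd
    rw [SimpleGraph.boxProd_adj, cyc_adj (by omega)]
    simp only [pathGraph_two_eq_top, SimpleGraph.top_adj]
    by_cases h1 : k.val % 2 = 0 <;> by_cases h2 : k'.val % 2 = 0
    · -- even, even
      have hu : F n m p (p - q) (ε, k) = r (T n m (p - q) ε (k.val / 2)) := by simp [F, h1]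
      have hv : F n m p (p - q) (ε', k') = r (T n m (p - q) ε' (k'.val / 2)) := by simp [F, h2]
      rw [hu, hv, cayley_adj, r_mul_r_inv, r_mul_r_inv]
      simp only [Set.mem_insert_iff, Set.mem_singleton_iff, DihedralGroup.r.injEq,
        DihedralGroup.sr.injEq, ne_eq, reduceCtorEq, or_false, false_or]
      constructor
      · rintro ⟨hnet, hh | hh⟩
        · obtain ⟨hee, hss⟩ := (LA' hs hs').mp (by linear_combination hh)
          exact Or.inl ⟨hee, (Fin.ext (by omega : k.val = k'.val) : k = k')⟩
        · obtain ⟨hee, hss⟩ := (LA' hs' hs).mp (by linear_combination hh)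
          exact Or.inl ⟨Ne.symm hee, (Fin.ext (by omega : k.val = k'.val) : k = k')⟩
      · rintro (⟨hee, hkk⟩ | ⟨hcyc, rfl⟩)
        · have hvv := congrArg Fin.val hkk
          have hss : k.val / 2 = k'.val / 2 := by omega
          refine ⟨fun hc => hee ((LT' hs hs').mp hc).1, Or.inl ?_⟩
          linear_combination (LA' hs hs').mpr ⟨hee, hss⟩
        · exact absurd hcyc (by omega)
    · -- even, odd
      have hu : F n m p (p - q) (ε, k) = r (T n m (p - q) ε (k.val / 2)) := by simp [F, h1]
      have hv : F n m p (p - q) (ε', k') = sr (p + T n m (p - q) ε' (k'.val / 2)) := by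
        simp [F, h2]
      rw [hu, hv, cayley_adj, r_mul_sr_inv, sr_mul_r_inv]
      simp only [Set.mem_insert_iff, Set.mem_singleton_iff, DihedralGroup.r.injEq,
        DihedralGroup.sr.injEq, ne_eq, reduceCtorEq, not_false_eq_true, true_and, false_or,
        or_self]
      constructor
      · rintro (hh | hh)
        · obtain ⟨hee, hss⟩ := (LT' hs' hs).mp (by linear_combination hh)
          exact Or.inr ⟨by omega, hee.symm⟩
        · obtain ⟨hee, hss⟩ := (LB' hs hs').mp (by linear_combination -hh - hedef)
          rcases hss with h3 | ⟨h3, h4⟩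
          · exact Or.inr ⟨by omega, hee⟩
          · exact Or.inr ⟨by omega, hee⟩
      · rintro (⟨hee, hkk⟩ | ⟨hcyc, rfl⟩)
        · exact absurd (congrArg Fin.val hkk) (by omega)
        · rcases hcyc with h3 | h3 | h3 | h3
          · exact Or.inl (by linear_combination (LT' hs' hs).mpr ⟨rfl, by omega⟩)
          · exact Or.inr (by
              linear_combination -((LB' hs hs').mpr ⟨rfl, Or.inl (by omega)⟩) - hedef)
          · exact absurd h3 (by omega)
          · exact Or.inr (by
              linear_combination
                -((LB' hs hs').mpr ⟨rfl, Or.inr ⟨by omega, by omega⟩⟩) - hedef)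
    · -- odd, even
      have hu : F n m p (p - q) (ε, k) = sr (p + T n m (p - q) ε (k.val / 2)) := by
        simp [F, h1]
      have hv : F n m p (p - q) (ε', k') = r (T n m (p - q) ε' (k'.val / 2)) := by simp [F, h2]
      rw [hu, hv, cayley_adj, sr_mul_r_inv, r_mul_sr_inv]
      simp only [Set.mem_insert_iff, Set.mem_singleton_iff, DihedralGroup.r.injEq,
        DihedralGroup.sr.injEq, ne_eq, reduceCtorEq, not_false_eq_true, true_and, false_or,
        or_self]
      constructor
      · rintro (hh | hh)
        · obtain ⟨hee, hss⟩ := (LT' hs hs').mp (by linear_combination hh)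
          exact Or.inr ⟨by omega, hee⟩
        · obtain ⟨hee, hss⟩ := (LB' hs' hs).mp (by linear_combination -hh - hedef)
          rcases hss with h3 | ⟨h3, h4⟩
          · exact Or.inr ⟨by omega, hee.symm⟩
          · exact Or.inr ⟨by omega, hee.symm⟩
      · rintro (⟨hee, hkk⟩ | ⟨hcyc, rfl⟩)
        · exact absurd (congrArg Fin.val hkk) (by omega)
        · rcases hcyc with h3 | h3 | h3 | h3
          · exact Or.inr (by
              linear_combination -((LB' hs' hs).mpr ⟨rfl, Or.inl (by omega)⟩) - hedef)
          · exact Or.inl (by linear_combination (LT' hs hs').mpr ⟨rfl, by omega⟩)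
          · exact Or.inr (by
              linear_combination
                -((LB' hs' hs).mpr ⟨rfl, Or.inr ⟨by omega, by omega⟩⟩) - hedef)
          · exact absurd h3 (by omega)
    · -- odd, odd
      have hu : F n m p (p - q) (ε, k) = sr (p + T n m (p - q) ε (k.val / 2)) := by
        simp [F, h1]
      have hv : F n m p (p - q) (ε', k') = sr (p + T n m (p - q) ε' (k'.val / 2)) := by
        simp [F, h2]
      rw [hu, hv, cayley_adj, sr_mul_sr_inv, sr_mul_sr_inv]
      simp only [Set.mem_insert_iff, Set.mem_singleton_iff, DihedralGroup.r.injEq,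
        DihedralGroup.sr.injEq, ne_eq, reduceCtorEq, or_false, false_or]
      constructor
      · rintro ⟨hnet, hh | hh⟩
        · obtain ⟨hee, hss⟩ := (LA' hs' hs).mp (by linear_combination hh)
          exact Or.inl ⟨Ne.symm hee, (Fin.ext (by omega : k.val = k'.val) : k = k')⟩
        · obtain ⟨hee, hss⟩ := (LA' hs hs').mp (by linear_combination hh)
          exact Or.inl ⟨hee, (Fin.ext (by omega : k.val = k'.val) : k = k')⟩
      · rintro (⟨hee, hkk⟩ | ⟨hcyc, rfl⟩)
        · have hvv := congrArg Fin.val hkk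
          have hss : k.val / 2 = k'.val / 2 := by omega
          refine ⟨fun hc => hee ((LT' hs hs').mp (by linear_combination hc)).1, Or.inl ?_⟩
          linear_combination (LA' hs' hs).mpr ⟨Ne.symm hee, hss.symm⟩
        · exact absurd hcyc (by omega)
  exact ⟨(SimpleGraph.Iso.symm ⟨Equiv.ofBijective _ hbij, fun {a b} => hadj a b⟩)⟩

end Stmt16Aux


theorem stmt_16 (n : ℕ) (hmod : n % 4 = 2) (hn : 6 ≤ n) (i j : ℤ)
    (x y : DihedralGroup n) (hx : x = A n ^ i * B n) (hy : y = A n ^ j * B n)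
    (hord : orderOf (x * y) = n / 2)
    (hgen : Subgroup.closure ({A n ^ (n / 2), x, y} : Set (DihedralGroup n)) = ⊤) :
    Nonempty (cayley ({A n ^ (n / 2), x, y} : Set (DihedralGroup n)) ≃g
      (pathGraph 2 □ cycleGraph n)) := by
  haveI : NeZero n := ⟨by omega⟩
  obtain ⟨m, hm2, hmdef⟩ : ∃ m, n = 2 * m ∧ m = n / 2 := ⟨n / 2, by omega, rfl⟩
  have hmodd : m % 2 = 1 := by omega
  have hm3 : 3 ≤ m := by omega
  rw [← hmdef] at hord ⊢
  have hxp : x = DihedralGroup.sr (0 - (i : ZMod n)) := by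
    rw [hx, Stmt16Aux.A_zpow]; rfl
  have hyq : y = DihedralGroup.sr (0 - (j : ZMod n)) := by
    rw [hy, Stmt16Aux.A_zpow]; rfl
  have hz : A n ^ m = DihedralGroup.r ((m : ℕ) : ZMod n) := by
    rw [show A n = DihedralGroup.r 1 from rfl, DihedralGroup.r_one_pow]
  rw [hz, hxp, hyq]
  set p : ZMod n := 0 - (i : ZMod n)
  set q : ZMod n := 0 - (j : ZMod n)
  have hxy : x * y = DihedralGroup.r (q - p) := by rw [hxp, hyq, DihedralGroup.sr_mul_sr]
  have hre : DihedralGroup.r (p - q) = (x * y)⁻¹ := by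
    rw [hxy, Stmt16Aux.r_inv']; congr 1; ring
  have horder : orderOf (DihedralGroup.r (p - q)) = m := by rw [hre, orderOf_inv, hord]
  have hme : ((m:ℕ) : ZMod n) * (p - q) = 0 := by
    have h1 := pow_orderOf_eq_one (DihedralGroup.r (p - q))
    rw [horder, Stmt16Aux.r_pow', DihedralGroup.one_def] at h1
    have h2 : (m : ℕ) • (p - q) = 0 := by injection h1
    rw [nsmul_eq_mul] at h2
    exact h2
  have hdvd : ∀ c : ℤ, ((c : ℤ) : ZMod n) * (p - q) = 0 → (m:ℤ) ∣ c := by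
    intro c hc
    rw [← horder, orderOf_dvd_iff_zpow_eq_one, Stmt16Aux.r_zpow', zsmul_eq_mul, hc,
      DihedralGroup.one_def]
  exact Stmt16Aux.main n m p q hm2 hmodd hm3 hme hdvd
end
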